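/- A density matrix ρ on ℂ^n satisfies the local KMS condition with temperature function β (with respect to the diagonal Hamiltonian H) if and only if ρ = e^{-β(H)H} / tr(e^{-β(H)H}). -/

import Mathlib

open Matrix
open scoped ComplexOrder

/-- The diagonal `n × n` complex matrix with entries `exp (f l)`. -/
noncomputable def eDiag {n : ℕ} (f : Fin n → ℂ) : Matrix (Fin n) (Fin n) ℂ :=
  Matrix.diagonal fun l => Complex.exp (f l)

lemma eDiag_mul {n : ℕ} (f g : Fin n → ℂ) :
    eDiag f * eDiag g = eDiag (fun l => f l + g l) := by
  simp [eDiag, diagonal_mul_diagonal, ← Complex.exp_add]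

lemma eDiag_zero {n : ℕ} : eDiag (fun _ : Fin n => 0) = 1 := by
  simp [eDiag]

lemma trace_ext {n : ℕ} {M N : Matrix (Fin n) (Fin n) ℂ}
    (h : ∀ y, Matrix.trace (M * y) = Matrix.trace (N * y)) : M = N := by
  ext i j
  have := h (single j i 1)
  simpa [Matrix.trace, Matrix.diag, Matrix.mul_apply, Matrix.single,
    Finset.sum_ite_eq, ite_and] using this

/-- A density matrix `ρ` on `ℂⁿ` satisfies the local KMS condition with temperature
function `β` (with respect to the diagonal Hamiltonian `H = diag(ε₁,…,εₙ)`)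
if and only if `ρ = e^{-β(H)H} / tr(e^{-β(H)H})`. -/
theorem local_KMS_iff_generalized_Gibbs {n : ℕ} (ε : Fin n → ℝ) (β : ℝ → ℝ)
    (ρ : Matrix (Fin n) (Fin n) ℂ) (hρ : ρ.PosSemidef) (htr : ρ.trace = 1) :
    (∀ (x y : Matrix (Fin n) (Fin n) ℂ) (t : ℝ),
        Matrix.trace (ρ * x *
          (eDiag (fun l => -((β (ε l) * ε l : ℝ) : ℂ)) *
            (eDiag (fun l => Complex.I * (t : ℂ) * (ε l : ℂ)) * y *
              eDiag (fun l => -(Complex.I * (t : ℂ) * (ε l : ℂ)))) *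
            eDiag (fun l => ((β (ε l) * ε l : ℝ) : ℂ)))) =
      Matrix.trace (ρ *
          (eDiag (fun l => Complex.I * (t : ℂ) * (ε l : ℂ)) * y *
            eDiag (fun l => -(Complex.I * (t : ℂ) * (ε l : ℂ)))) * x)) ↔
    ρ = (Matrix.trace (eDiag (fun l => -((β (ε l) * ε l : ℝ) : ℂ))))⁻¹ •
      eDiag (fun l => -((β (ε l) * ε l : ℝ) : ℂ)) := by
  set A : Matrix (Fin n) (Fin n) ℂ := eDiag (fun l => -((β (ε l) * ε l : ℝ) : ℂ)) with hA
  set A' : Matrix (Fin n) (Fin n) ℂ := eDiag (fun l => ((β (ε l) * ε l : ℝ) : ℂ)) with hA'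
  have hAA' : A * A' = 1 := by
    rw [hA, hA', eDiag_mul]; simpa using eDiag_zero
  have hA'A : A' * A = 1 := by
    rw [hA, hA', eDiag_mul]; simpa using eDiag_zero
  constructor
  · intro h
    have h0 : ∀ x y : Matrix (Fin n) (Fin n) ℂ,
        Matrix.trace (ρ * (x * (A * (y * A')))) = Matrix.trace (ρ * (y * x)) := by
      intro x y
      have := h x y 0
      simp only [Complex.ofReal_zero, mul_zero, zero_mul, neg_zero, eDiag_zero,
        one_mul, mul_one] at this
      simpa only [mul_assoc] using this
    have hx : ∀ x : Matrix (Fin n) (Fin n) ℂ, A' * ρ * x * A = x * ρ := by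
      intro x
      apply trace_ext
      intro y
      calc Matrix.trace (A' * ρ * x * A * y)
          = Matrix.trace (ρ * (x * (A * (y * A')))) := by
            simp only [mul_assoc]
            rw [Matrix.trace_mul_comm]
            simp only [mul_assoc]
        _ = Matrix.trace (ρ * (y * x)) := h0 x y
        _ = Matrix.trace (x * ρ * y) := by
            rw [Matrix.trace_mul_comm ρ (y * x), mul_assoc, Matrix.trace_mul_comm y (x * ρ)]
    have hx' : ∀ x : Matrix (Fin n) (Fin n) ℂ, A' * ρ * x = x * (ρ * A') := by
      intro x
      have := congrArg (fun M => M * A') (hx x)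
      simpa only [mul_assoc, hAA', mul_one] using this
    have hcomm : ∀ x : Matrix (Fin n) (Fin n) ℂ, (ρ * A') * x = x * (ρ * A') := by
      intro x
      have h1 : A' * ρ = ρ * A' := by simpa using hx' 1
      rw [← h1, hx' x, h1]
    obtain ⟨r, hr⟩ := Matrix.mem_range_scalar_of_commute_single
      (M := ρ * A') (fun i j _ => ((hcomm _).symm))
    have hρA : ρ = r • A := by
      have : ρ * (A' * A) = ρ := by rw [hA'A, mul_one]
      rw [← this, ← mul_assoc, ← hr]
      rw [Matrix.smul_eq_diagonal_mul]
      rfl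
    have htrA : Matrix.trace A = ((∑ l, Real.exp (-(β (ε l) * ε l)) : ℝ) : ℂ) := by
      rw [hA]
      simp only [eDiag, Matrix.trace_diagonal, Complex.ofReal_sum]
      exact Finset.sum_congr rfl fun l _ => by rw [Complex.ofReal_exp, Complex.ofReal_neg]
    have hn : Nonempty (Fin n) := by
      by_contra hne
      rw [not_nonempty_iff] at hne
      rw [Matrix.trace] at htr
      simp at htr
    have htrA0 : Matrix.trace A ≠ 0 := by
      rw [htrA]
      exact_mod_cast ne_of_gt (Finset.sum_pos (fun l _ => Real.exp_pos _)
        Finset.univ_nonempty)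
    have hr1 : r * Matrix.trace A = 1 := by
      rw [← htr, hρA, Matrix.trace_smul, smul_eq_mul]
    rw [hρA, eq_inv_of_mul_eq_one_left hr1]
  · intro h x y t
    set Z : Matrix (Fin n) (Fin n) ℂ :=
      eDiag (fun l => Complex.I * (t : ℂ) * (ε l : ℂ)) * y *
        eDiag (fun l => -(Complex.I * (t : ℂ) * (ε l : ℂ))) with hZ
    rw [h]
    simp only [Matrix.smul_mul, Matrix.trace_smul]
    congr 1
    calc Matrix.trace (A * x * (A * Z * A'))
        = Matrix.trace ((A * Z * A') * (A * x)) := Matrix.trace_mul_comm _ _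
      _ = Matrix.trace (A * Z * x) := by
          simp only [mul_assoc]
          rw [← mul_assoc A' A x, hA'A, one_mul]
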